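/- (CHSH inequality) Under assumptions (E1), (E2), (E3), and the locality assumption (LOC), the quantity K^CHSH := E_{ab}(D1D2) − E_{a′b}(D1D2) + E_{ab′}(D1D2) + E_{a′b′}(D1D2) satisfies |K^CHSH| ≤ 2. -/

import Mathlib

open MeasureTheory ProbabilityTheory

/-- Conditional probability of the event `E` given the sub-σ-algebra `m`:
the conditional expectation of the indicator function of `E`. -/
noncomputable def cprob {Ω : Type*} [MeasurableSpace Ω] (P : Measure Ω)
    (m : MeasurableSpace Ω) (E : Set Ω) : Ω → ℝ :=
  P[E.indicator (fun _ => (1 : ℝ)) | m]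

lemma chsh_aux {p q r s : ℝ} (hp : |p| ≤ 1) (hq : |q| ≤ 1) (hr : |r| ≤ 1) (hs : |s| ≤ 1) :
    |p * r - q * r + p * s + q * s| ≤ 2 := by
  have h : p * r - q * r + p * s + q * s = p * (r + s) + q * (s - r) := by ring
  rw [h]
  have hr' := abs_le.1 hr
  have hs' := abs_le.1 hs
  have h1 : |p * (r + s)| ≤ |r + s| := by
    rw [abs_mul]
    nlinarith [abs_nonneg (r + s), abs_nonneg p]
  have h2 : |q * (s - r)| ≤ |s - r| := by
    rw [abs_mul]
    nlinarith [abs_nonneg (s - r), abs_nonneg q]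
  have h3 : |r + s| + |s - r| ≤ 2 := by
    rcases abs_cases (r + s) with hc1 | hc1 <;> rcases abs_cases (s - r) with hc2 | hc2 <;>
      rw [hc1.1, hc2.1] <;> linarith [hr'.1, hr'.2, hs'.1, hs'.2]
  calc |p * (r + s) + q * (s - r)| ≤ |p * (r + s)| + |q * (s - r)| := abs_add_le _ _
    _ ≤ 2 := by linarith

/-- CHSH inequality: under (E1), (E2), (E3) and locality (LOC),
`|E_{ab}(D1D2) − E_{a′b}(D1D2) + E_{ab′}(D1D2) + E_{a′b′}(D1D2)| ≤ 2`,
where `E_{xy}(D1D2)` is the expectation of `D1·D2` conditioned on the event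
`{A = x} ∩ {B = y}`.  Settings `a, a′` are modelled by `true, false : Bool`
(likewise `b, b′`). -/
theorem stmt4 {Ω : Type*} [MeasurableSpace Ω] (P : Measure Ω) [IsProbabilityMeasure P]
    {Λ : Type*} [MeasurableSpace Λ] (lam : Ω → Λ) (hlam : Measurable lam)
    (A B : Ω → Bool) (hA : Measurable A) (hB : Measurable B)
    (D1 D2 : Ω → ℝ) (hD1 : Measurable D1) (hD2 : Measurable D2)
    (hD1v : ∀ ω, D1 ω = 1 ∨ D1 ω = -1) (hD2v : ∀ ω, D2 ω = 1 ∨ D2 ω = -1)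
    (hE1 : IndepFun A B P)
    (hE2 : 0 < P {ω | A ω = true} ∧ 0 < P {ω | A ω = false} ∧
           0 < P {ω | B ω = true} ∧ 0 < P {ω | B ω = false})
    (hE3 : IndepFun A lam P ∧ IndepFun B lam P)
    (hLOC : ∀ E1 E2 : Set Ω,
      MeasurableSet[MeasurableSpace.comap (fun ω => (D1 ω, A ω)) inferInstance] E1 →
      MeasurableSet[MeasurableSpace.comap (fun ω => (D2 ω, B ω)) inferInstance] E2 →
      cprob P (MeasurableSpace.comap lam inferInstance) (E1 ∩ E2) =ᵐ[P]
        fun ω => cprob P (MeasurableSpace.comap lam inferInstance) E1 ω *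
          cprob P (MeasurableSpace.comap lam inferInstance) E2 ω) :
    |(∫ ω, D1 ω * D2 ω ∂(P[|{ω | A ω = true} ∩ {ω | B ω = true}]))
      - (∫ ω, D1 ω * D2 ω ∂(P[|{ω | A ω = false} ∩ {ω | B ω = true}]))
      + (∫ ω, D1 ω * D2 ω ∂(P[|{ω | A ω = true} ∩ {ω | B ω = false}]))
      + (∫ ω, D1 ω * D2 ω ∂(P[|{ω | A ω = false} ∩ {ω | B ω = false}]))| ≤ 2 := by
  obtain ⟨hE3A, hE3B⟩ := hE3
  obtain ⟨hAt, hAf, hBt, hBf⟩ := hE2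
  have hm : MeasurableSpace.comap lam inferInstance ≤ ‹MeasurableSpace Ω› := hlam.comap_le
  -- basic measurability of the events
  have hSmeas : ∀ x : Bool, MeasurableSet {ω | A ω = x} := fun x =>
    hA (measurableSet_singleton x)
  have hTmeas : ∀ y : Bool, MeasurableSet {ω | B ω = y} := fun y =>
    hB (measurableSet_singleton y)
  have hE1meas : ∀ (x : Bool) (v : ℝ), MeasurableSet {ω | D1 ω = v ∧ A ω = x} := fun x v =>
    (hD1 (measurableSet_singleton v)).inter (hA (measurableSet_singleton x))
  have hE2meas : ∀ (y : Bool) (v : ℝ), MeasurableSet {ω | D2 ω = v ∧ B ω = y} := fun y v =>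
    (hD2 (measurableSet_singleton v)).inter (hB (measurableSet_singleton y))
  have hE1mem : ∀ (x : Bool) (v : ℝ),
      MeasurableSet[MeasurableSpace.comap (fun ω => (D1 ω, A ω)) inferInstance]
        {ω | D1 ω = v ∧ A ω = x} := by
    intro x v
    refine ⟨{v} ×ˢ {x}, (measurableSet_singleton v).prod (measurableSet_singleton x), ?_⟩
    ext ω
    simp [Set.mem_prod]
  have hE2mem : ∀ (y : Bool) (v : ℝ),
      MeasurableSet[MeasurableSpace.comap (fun ω => (D2 ω, B ω)) inferInstance]
        {ω | D2 ω = v ∧ B ω = y} := by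
    intro y v
    refine ⟨{v} ×ˢ {y}, (measurableSet_singleton v).prod (measurableSet_singleton y), ?_⟩
    ext ω
    simp [Set.mem_prod]
  -- integrability of indicators
  have hint : ∀ E : Set Ω, MeasurableSet E → Integrable (E.indicator fun _ => (1 : ℝ)) P :=
    fun E hE => (integrable_const (1 : ℝ)).indicator hE
  -- the unnormalized conditional correlators
  set X : Bool → Ω → ℝ := fun x ω =>
    cprob P (MeasurableSpace.comap lam inferInstance) {ω' | D1 ω' = 1 ∧ A ω' = x} ω - cprob P (MeasurableSpace.comap lam inferInstance) {ω' | D1 ω' = (-1 : ℝ) ∧ A ω' = x} ω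
    with hX_def
  set Y : Bool → Ω → ℝ := fun y ω =>
    cprob P (MeasurableSpace.comap lam inferInstance) {ω' | D2 ω' = 1 ∧ B ω' = y} ω - cprob P (MeasurableSpace.comap lam inferInstance) {ω' | D2 ω' = (-1 : ℝ) ∧ B ω' = y} ω
    with hY_def
  have hcprob_meas : ∀ E : Set Ω,
      AEStronglyMeasurable (cprob P (MeasurableSpace.comap lam inferInstance) E) P := by
    intro E
    unfold cprob
    exact (stronglyMeasurable_condExp.mono hm).aestronglyMeasurable
  -- pointwise decomposition of D1·D2·1_{SxTy}
  have hkey : ∀ x y : Bool,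
      (fun ω => D1 ω * D2 ω * (({ω' | A ω' = x} ∩ {ω' | B ω' = y}).indicator
        (fun _ => (1 : ℝ)) ω))
      = ({ω' | D1 ω' = 1 ∧ A ω' = x} ∩ {ω' | D2 ω' = 1 ∧ B ω' = y}).indicator (fun _ => (1 : ℝ))
        - ({ω' | D1 ω' = 1 ∧ A ω' = x} ∩ {ω' | D2 ω' = (-1 : ℝ) ∧ B ω' = y}).indicator
            (fun _ => (1 : ℝ))
        - ({ω' | D1 ω' = (-1 : ℝ) ∧ A ω' = x} ∩ {ω' | D2 ω' = 1 ∧ B ω' = y}).indicator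
            (fun _ => (1 : ℝ))
        + ({ω' | D1 ω' = (-1 : ℝ) ∧ A ω' = x} ∩ {ω' | D2 ω' = (-1 : ℝ) ∧ B ω' = y}).indicator
            (fun _ => (1 : ℝ)) := by
    intro x y
    funext ω
    simp only [Pi.add_apply, Pi.sub_apply, Set.indicator_apply, Set.mem_inter_iff,
      Set.mem_setOf_eq]
    rcases hD1v ω with h1 | h1 <;> rcases hD2v ω with h2 | h2 <;>
      by_cases hx : A ω = x <;> by_cases hy : B ω = y <;>
      simp [h1, h2, hx, hy] <;> norm_num
  -- step B: conditional expectation is a product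
  have hcond : ∀ x y : Bool,
      P[(fun ω => D1 ω * D2 ω * (({ω' | A ω' = x} ∩ {ω' | B ω' = y}).indicator
        (fun _ => (1 : ℝ)) ω)) | MeasurableSpace.comap lam inferInstance] =ᵐ[P] fun ω => X x ω * Y y ω := by
    intro x y
    rw [hkey x y]
    have i1 := hint _ ((hE1meas x 1).inter (hE2meas y 1))
    have i2 := hint _ ((hE1meas x 1).inter (hE2meas y (-1)))
    have i3 := hint _ ((hE1meas x (-1)).inter (hE2meas y 1))
    have i4 := hint _ ((hE1meas x (-1)).inter (hE2meas y (-1)))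
    have e12 := condExp_sub (m := MeasurableSpace.comap lam inferInstance) (μ := P) i1 i2
    have e123 := condExp_sub (m := MeasurableSpace.comap lam inferInstance) (μ := P) (i1.sub i2) i3
    have e1234 := condExp_add (m := MeasurableSpace.comap lam inferInstance) (μ := P) ((i1.sub i2).sub i3) i4
    have l1 := hLOC _ _ (hE1mem x 1) (hE2mem y 1)
    have l2 := hLOC _ _ (hE1mem x 1) (hE2mem y (-1))
    have l3 := hLOC _ _ (hE1mem x (-1)) (hE2mem y 1)
    have l4 := hLOC _ _ (hE1mem x (-1)) (hE2mem y (-1))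
    unfold cprob at l1 l2 l3 l4
    simp only [hX_def, hY_def]
    unfold cprob
    filter_upwards [e12, e123, e1234, l1, l2, l3, l4] with ω he12 he123 he1234 hl1 hl2 hl3 hl4
    simp only [Pi.add_apply, Pi.sub_apply] at he12 he123 he1234
    rw [he1234, he123, he12, hl1, hl2, hl3, hl4]
    ring
  -- step F1: expectation of the correlator over the whole space
  have hand : ∀ x y : Bool,
      ∫ ω, D1 ω * D2 ω * (({ω' | A ω' = x} ∩ {ω' | B ω' = y}).indicator (fun _ => (1 : ℝ)) ω) ∂P
        = ∫ ω, X x ω * Y y ω ∂P := by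
    intro x y
    rw [← integral_condExp hm]
    exact integral_congr_ae (hcond x y)
  -- step F3/F4: a.e. bound on X and Y
  have hconstA : ∀ x : Bool,
      P[({ω' | A ω' = x}).indicator (fun _ => (1 : ℝ)) | MeasurableSpace.comap lam inferInstance]
        =ᵐ[P] fun _ => (P {ω' | A ω' = x}).toReal := by
    intro x
    have hSA : MeasurableSet[MeasurableSpace.comap A inferInstance] {ω' | A ω' = x} :=
      ⟨{x}, measurableSet_singleton x, rfl⟩
    have hsm : StronglyMeasurable[MeasurableSpace.comap A inferInstance]
        (({ω' | A ω' = x}).indicator (fun _ => (1 : ℝ))) :=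
      stronglyMeasurable_const.indicator hSA
    have := condExp_indep_eq (μ := P) hA.comap_le hm hsm hE3A
    refine this.trans ?_
    filter_upwards with ω
    rw [show (fun _ : Ω => (1 : ℝ)) = (1 : Ω → ℝ) from rfl, integral_indicator_one (hSmeas x), measureReal_def]
  have hconstB : ∀ y : Bool,
      P[({ω' | B ω' = y}).indicator (fun _ => (1 : ℝ)) | MeasurableSpace.comap lam inferInstance]
        =ᵐ[P] fun _ => (P {ω' | B ω' = y}).toReal := by
    intro y
    have hSB : MeasurableSet[MeasurableSpace.comap B inferInstance] {ω' | B ω' = y} :=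
      ⟨{y}, measurableSet_singleton y, rfl⟩
    have hsm : StronglyMeasurable[MeasurableSpace.comap B inferInstance]
        (({ω' | B ω' = y}).indicator (fun _ => (1 : ℝ))) :=
      stronglyMeasurable_const.indicator hSB
    have := condExp_indep_eq (μ := P) hB.comap_le hm hsm hE3B
    refine this.trans ?_
    filter_upwards with ω
    rw [show (fun _ : Ω => (1 : ℝ)) = (1 : Ω → ℝ) from rfl, integral_indicator_one (hTmeas y), measureReal_def]
  have hXbound : ∀ x : Bool, ∀ᵐ ω ∂P, |X x ω| ≤ (P {ω' | A ω' = x}).toReal := by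
    intro x
    have hsplit : (fun ω => D1 ω * ({ω' | A ω' = x}).indicator (fun _ => (1 : ℝ)) ω)
        = ({ω' | D1 ω' = 1 ∧ A ω' = x}).indicator (fun _ => (1 : ℝ))
          - ({ω' | D1 ω' = (-1 : ℝ) ∧ A ω' = x}).indicator (fun _ => (1 : ℝ)) := by
      funext ω
      simp only [Pi.sub_apply, Set.indicator_apply, Set.mem_setOf_eq]
      rcases hD1v ω with h | h <;> by_cases hx : A ω = x <;> simp [h, hx] <;> norm_num
    have hintD : Integrable (fun ω => D1 ω * ({ω' | A ω' = x}).indicator (fun _ => (1 : ℝ)) ω) P := by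
      rw [hsplit]
      exact (hint _ (hE1meas x 1)).sub (hint _ (hE1meas x (-1)))
    have hXeq : P[(fun ω => D1 ω * ({ω' | A ω' = x}).indicator (fun _ => (1 : ℝ)) ω) | MeasurableSpace.comap lam inferInstance]
        =ᵐ[P] X x := by
      rw [hsplit]
      have := condExp_sub (m := MeasurableSpace.comap lam inferInstance) (μ := P) (hint _ (hE1meas x 1)) (hint _ (hE1meas x (-1)))
      refine this.trans ?_
      filter_upwards with ω
      simp [hX_def, cprob]
    have hub : (fun ω => D1 ω * ({ω' | A ω' = x}).indicator (fun _ => (1 : ℝ)) ω)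
        ≤ᵐ[P] ({ω' | A ω' = x}).indicator (fun _ => (1 : ℝ)) := by
      filter_upwards with ω
      rcases hD1v ω with h | h <;> by_cases hx : ω ∈ {ω' | A ω' = x} <;>
        simp [h, Set.indicator_apply, hx]
    have hlb : (-(({ω' | A ω' = x}).indicator (fun _ => (1 : ℝ))))
        ≤ᵐ[P] (fun ω => D1 ω * ({ω' | A ω' = x}).indicator (fun _ => (1 : ℝ)) ω) := by
      filter_upwards with ω
      rcases hD1v ω with h | h <;> by_cases hx : ω ∈ {ω' | A ω' = x} <;>
        simp [h, Set.indicator_apply, hx]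
    have hub' := condExp_mono (m := MeasurableSpace.comap lam inferInstance) (μ := P) hintD (hint _ (hSmeas x)) hub
    have hlb' := condExp_mono (m := MeasurableSpace.comap lam inferInstance) (μ := P) ((hint _ (hSmeas x)).neg) hintD hlb
    have hneg := condExp_neg (m := MeasurableSpace.comap lam inferInstance) (μ := P) (({ω' | A ω' = x}).indicator (fun _ => (1 : ℝ)))
    filter_upwards [hXeq, hub', hlb', hneg, hconstA x] with ω heq hu hl hn hc
    rw [abs_le]
    constructor
    · have := hl
      rw [hn] at this
      simp only [Pi.neg_apply] at this
      rw [hc] at this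
      rw [← heq]
      linarith
    · have := hu
      rw [hc] at this
      rw [← heq]
      linarith [this]
  have hYbound : ∀ y : Bool, ∀ᵐ ω ∂P, |Y y ω| ≤ (P {ω' | B ω' = y}).toReal := by
    intro y
    have hsplit : (fun ω => D2 ω * ({ω' | B ω' = y}).indicator (fun _ => (1 : ℝ)) ω)
        = ({ω' | D2 ω' = 1 ∧ B ω' = y}).indicator (fun _ => (1 : ℝ))
          - ({ω' | D2 ω' = (-1 : ℝ) ∧ B ω' = y}).indicator (fun _ => (1 : ℝ)) := by
      funext ω
      simp only [Pi.sub_apply, Set.indicator_apply, Set.mem_setOf_eq]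
      rcases hD2v ω with h | h <;> by_cases hy : B ω = y <;> simp [h, hy] <;> norm_num
    have hintD : Integrable (fun ω => D2 ω * ({ω' | B ω' = y}).indicator (fun _ => (1 : ℝ)) ω) P := by
      rw [hsplit]
      exact (hint _ (hE2meas y 1)).sub (hint _ (hE2meas y (-1)))
    have hYeq : P[(fun ω => D2 ω * ({ω' | B ω' = y}).indicator (fun _ => (1 : ℝ)) ω) | MeasurableSpace.comap lam inferInstance]
        =ᵐ[P] Y y := by
      rw [hsplit]
      have := condExp_sub (m := MeasurableSpace.comap lam inferInstance) (μ := P) (hint _ (hE2meas y 1)) (hint _ (hE2meas y (-1)))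
      refine this.trans ?_
      filter_upwards with ω
      simp [hY_def, cprob]
    have hub : (fun ω => D2 ω * ({ω' | B ω' = y}).indicator (fun _ => (1 : ℝ)) ω)
        ≤ᵐ[P] ({ω' | B ω' = y}).indicator (fun _ => (1 : ℝ)) := by
      filter_upwards with ω
      rcases hD2v ω with h | h <;> by_cases hy : ω ∈ {ω' | B ω' = y} <;>
        simp [h, Set.indicator_apply, hy]
    have hlb : (-(({ω' | B ω' = y}).indicator (fun _ => (1 : ℝ))))
        ≤ᵐ[P] (fun ω => D2 ω * ({ω' | B ω' = y}).indicator (fun _ => (1 : ℝ)) ω) := by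
      filter_upwards with ω
      rcases hD2v ω with h | h <;> by_cases hy : ω ∈ {ω' | B ω' = y} <;>
        simp [h, Set.indicator_apply, hy]
    have hub' := condExp_mono (m := MeasurableSpace.comap lam inferInstance) (μ := P) hintD (hint _ (hTmeas y)) hub
    have hlb' := condExp_mono (m := MeasurableSpace.comap lam inferInstance) (μ := P) ((hint _ (hTmeas y)).neg) hintD hlb
    have hneg := condExp_neg (m := MeasurableSpace.comap lam inferInstance) (μ := P) (({ω' | B ω' = y}).indicator (fun _ => (1 : ℝ)))
    filter_upwards [hYeq, hub', hlb', hneg, hconstB y] with ω heq hu hl hn hc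
    rw [abs_le]
    constructor
    · have := hl
      rw [hn] at this
      simp only [Pi.neg_apply] at this
      rw [hc] at this
      rw [← heq]
      linarith
    · have := hu
      rw [hc] at this
      rw [← heq]
      linarith [this]
  -- positivity of the normalizing constants
  have hPApos : ∀ x : Bool, 0 < (P {ω' | A ω' = x}).toReal := by
    intro x
    cases x
    · exact ENNReal.toReal_pos hAf.ne' (measure_ne_top P _)
    · exact ENNReal.toReal_pos hAt.ne' (measure_ne_top P _)
  have hPBpos : ∀ y : Bool, 0 < (P {ω' | B ω' = y}).toReal := by
    intro y
    cases y
    · exact ENNReal.toReal_pos hBf.ne' (measure_ne_top P _)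
    · exact ENNReal.toReal_pos hBt.ne' (measure_ne_top P _)
  -- normalized correlators
  set X' : Bool → Ω → ℝ := fun x ω => ((P {ω' | A ω' = x}).toReal)⁻¹ * X x ω with hX'_def
  set Y' : Bool → Ω → ℝ := fun y ω => ((P {ω' | B ω' = y}).toReal)⁻¹ * Y y ω with hY'_def
  have hX'bd : ∀ x : Bool, ∀ᵐ ω ∂P, |X' x ω| ≤ 1 := by
    intro x
    filter_upwards [hXbound x] with ω hω
    have h0 : (0 : ℝ) ≤ ((P {ω' | A ω' = x}).toReal)⁻¹ := inv_nonneg.2 ENNReal.toReal_nonneg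
    calc |X' x ω| = ((P {ω' | A ω' = x}).toReal)⁻¹ * |X x ω| := by
          rw [hX'_def]; rw [abs_mul, abs_of_nonneg h0]
      _ ≤ ((P {ω' | A ω' = x}).toReal)⁻¹ * (P {ω' | A ω' = x}).toReal := by gcongr
      _ = 1 := inv_mul_cancel₀ (hPApos x).ne'
  have hY'bd : ∀ y : Bool, ∀ᵐ ω ∂P, |Y' y ω| ≤ 1 := by
    intro y
    filter_upwards [hYbound y] with ω hω
    have h0 : (0 : ℝ) ≤ ((P {ω' | B ω' = y}).toReal)⁻¹ := inv_nonneg.2 ENNReal.toReal_nonneg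
    calc |Y' y ω| = ((P {ω' | B ω' = y}).toReal)⁻¹ * |Y y ω| := by
          rw [hY'_def]; rw [abs_mul, abs_of_nonneg h0]
      _ ≤ ((P {ω' | B ω' = y}).toReal)⁻¹ * (P {ω' | B ω' = y}).toReal := by gcongr
      _ = 1 := inv_mul_cancel₀ (hPBpos y).ne'
  have hX'meas : ∀ x : Bool, AEStronglyMeasurable (X' x) P := by
    intro x
    exact (((hcprob_meas _).sub (hcprob_meas _)).const_mul _)
  have hY'meas : ∀ y : Bool, AEStronglyMeasurable (Y' y) P := by
    intro y
    exact (((hcprob_meas _).sub (hcprob_meas _)).const_mul _)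
  -- rewrite each conditional-expectation term
  have hterm : ∀ x y : Bool,
      (∫ ω, D1 ω * D2 ω ∂(P[|{ω | A ω = x} ∩ {ω | B ω = y}]))
        = ∫ ω, X' x ω * Y' y ω ∂P := by
    intro x y
    have hPxy : P ({ω | A ω = x} ∩ {ω | B ω = y}) = P {ω | A ω = x} * P {ω | B ω = y} :=
      hE1.measure_inter_preimage_eq_mul {x} {y} (measurableSet_singleton x)
        (measurableSet_singleton y)
    have hind : ({ω | A ω = x} ∩ {ω | B ω = y}).indicator (fun ω => D1 ω * D2 ω)
        = fun ω => D1 ω * D2 ω * (({ω' | A ω' = x} ∩ {ω' | B ω' = y}).indicator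
          (fun _ => (1 : ℝ)) ω) := by
      funext ω
      by_cases h : ω ∈ ({ω' | A ω' = x} ∩ {ω' | B ω' = y}) <;> simp [Set.indicator_apply, h]
    have step1 : (∫ ω, D1 ω * D2 ω ∂(P[|{ω | A ω = x} ∩ {ω | B ω = y}]))
        = ((P ({ω | A ω = x} ∩ {ω | B ω = y}))⁻¹).toReal
          * ∫ ω, X x ω * Y y ω ∂P := by
      show (∫ ω, D1 ω * D2 ω
          ∂((P ({ω | A ω = x} ∩ {ω | B ω = y}))⁻¹ • P.restrict ({ω | A ω = x} ∩ {ω | B ω = y})))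
        = _
      rw [integral_smul_measure, ← integral_indicator ((hSmeas x).inter (hTmeas y)), hind,
        hand x y, smul_eq_mul]
    rw [step1, hPxy, ENNReal.toReal_inv, ENNReal.toReal_mul, mul_inv]
    have : ∫ ω, X' x ω * Y' y ω ∂P
        = (((P {ω' | A ω' = x}).toReal)⁻¹ * ((P {ω' | B ω' = y}).toReal)⁻¹)
          * ∫ ω, X x ω * Y y ω ∂P := by
      rw [← integral_const_mul]
      congr 1
      funext ω
      simp only [hX'_def, hY'_def]
      ring
    rw [this]
  rw [hterm true true, hterm false true, hterm true false, hterm false false]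
  -- integrability of the products
  have hprod_int : ∀ x y : Bool, Integrable (fun ω => X' x ω * Y' y ω) P := by
    intro x y
    refine Integrable.mono' (integrable_const (1 : ℝ)) ((hX'meas x).mul (hY'meas y)) ?_
    filter_upwards [hX'bd x, hY'bd y] with ω h1 h2
    rw [Real.norm_eq_abs, abs_mul]
    nlinarith [abs_nonneg (X' x ω), abs_nonneg (Y' y ω)]
  have hcomb : ∫ ω, X' true ω * Y' true ω ∂P - ∫ ω, X' false ω * Y' true ω ∂P
      + ∫ ω, X' true ω * Y' false ω ∂P + ∫ ω, X' false ω * Y' false ω ∂P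
      = ∫ ω, (X' true ω * Y' true ω - X' false ω * Y' true ω + X' true ω * Y' false ω
          + X' false ω * Y' false ω) ∂P := by
    have I12 : Integrable (fun ω => X' true ω * Y' true ω - X' false ω * Y' true ω) P :=
      (hprod_int true true).sub (hprod_int false true)
    have I123 : Integrable (fun ω => X' true ω * Y' true ω - X' false ω * Y' true ω
        + X' true ω * Y' false ω) P := I12.add (hprod_int true false)
    rw [integral_add I123 (hprod_int false false), integral_add I12 (hprod_int true false),
      integral_sub (hprod_int true true) (hprod_int false true)]
  rw [hcomb]
  have hbd : ∀ᵐ ω ∂P,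
      ‖X' true ω * Y' true ω - X' false ω * Y' true ω + X' true ω * Y' false ω
        + X' false ω * Y' false ω‖ ≤ 2 := by
    filter_upwards [hX'bd true, hX'bd false, hY'bd true, hY'bd false] with ω h1 h2 h3 h4
    rw [Real.norm_eq_abs]
    exact chsh_aux h1 h2 h3 h4
  have := norm_integral_le_of_norm_le_const (μ := P) hbd
  rw [Real.norm_eq_abs] at this
  simpa using this
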